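/- For every real ε with 0 < ε < 1, all natural numbers i and b, and every real c with c ≥ (1+ε)^{−(b+1)}, it holds that (2/ε)·(1+ε)^{i+1}·c ≥ 2·max(i − b + 1, 0). -/

import Mathlib

theorem per_set_estimate (ε : ℝ) (i b : ℕ) (c : ℝ)
    (hε0 : 0 < ε) (hε1 : ε < 1)
    (hc : c ≥ (1 + ε) ^ (-((b : ℤ) + 1))) :
    (2 / ε) * (1 + ε) ^ (i + 1) * c ≥ 2 * ((max ((i : ℤ) - b + 1) 0 : ℤ) : ℝ) := by
  have h1 : (0:ℝ) < 1 + ε := by linarith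
  rcases le_or_gt ((i:ℤ) - b + 1) 0 with h | h
  · rw [max_eq_right h]
    push_cast
    have hcpos : 0 < c := lt_of_lt_of_le (zpow_pos h1 _) hc
    have := mul_pos (mul_pos (div_pos two_pos hε0) (pow_pos h1 (i+1))) hcpos
    linarith
  · rw [max_eq_left (le_of_lt h)]
    -- here i + 1 ≥ b + 1, i.e. b ≤ i
    have hbi : b ≤ i := by omega
    set n : ℕ := i - b with hn
    have hin : i = b + n := by omega
    have hpow : (1+ε)^n ≥ 1 + ε * n := by
      have := one_add_mul_le_pow (a := ε) (by linarith) n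
      linarith [this]
    have key : (1+ε)^n ≥ ε * (n + 1) := by
      nlinarith [Nat.cast_nonneg (α := ℝ) n]
    -- LHS: (2/ε)*(1+ε)^(i+1)*c ≥ (2/ε)*(1+ε)^(i+1)*(1+ε)^(-(b+1)) = (2/ε)*(1+ε)^n
    have hz : (1+ε)^(i+1) * (1+ε) ^ (-((b : ℤ) + 1)) = (1+ε)^n := by
      rw [← zpow_natCast (1+ε) (i+1), ← zpow_add₀ (ne_of_gt h1), ← zpow_natCast (1+ε) n]
      congr 1
      push_cast [hin]
      ring
    have hle : (2 / ε) * (1 + ε) ^ (i + 1) * c ≥ (2/ε) * (1+ε)^n := by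
      rw [← hz, ← mul_assoc]
      have : 0 < (2/ε) * (1+ε)^(i+1) := mul_pos (div_pos two_pos hε0) (pow_pos h1 _)
      exact mul_le_mul_of_nonneg_left hc (le_of_lt this)
    have hrhs : (((i : ℤ) - b + 1 : ℤ) : ℝ) = (n:ℝ) + 1 := by
      push_cast [hin]; ring
    rw [hrhs]
    have h2 : (2/ε) * (1+ε)^n ≥ (2/ε) * (ε * ((n:ℝ)+1)) :=
      mul_le_mul_of_nonneg_left key (le_of_lt (div_pos two_pos hε0))
    have h3 : (2/ε) * (ε * ((n:ℝ)+1)) = 2 * ((n:ℝ)+1) := by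
      field_simp
    linarith
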